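/- For every integer n ≥ 1 and every ξ ∈ ℝ^n, the LogSumExp obstacle function converges as the smoothing parameter tends to zero from above: lim_{α → 0⁺} o^lse(ξ; α) = ‖ξ‖_2² / n, where ‖ξ‖_2 is the Euclidean norm. In particular, the sublevel sets O^lse(α) converge to the Euclidean ball {ξ : ‖ξ‖_2 ≤ √n} = O^p(2) as α → 0⁺. -/

import Mathlib

open Real Filter Set

lemma sinh_div_tendsto : Tendsto (fun t : ℝ => Real.sinh t / t) (nhdsWithin 0 {0}ᶜ) (nhds 1) := by
  have h := hasDerivAt_iff_tendsto_slope.mp (Real.hasDerivAt_sinh 0)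
  simp only [Real.cosh_zero] at h
  refine h.congr (fun t => ?_)
  simp [slope_def_field, div_eq_inv_mul]

lemma cosh_sub_one_div_sq : Tendsto (fun t : ℝ => (Real.cosh t - 1) / t ^ 2)
    (nhdsWithin 0 {0}ᶜ) (nhds (1 / 2)) := by
  have hhalf : Tendsto (fun t : ℝ => t / 2) (nhdsWithin 0 {0}ᶜ) (nhdsWithin 0 {0}ᶜ) := by
    apply tendsto_nhdsWithin_of_tendsto_nhds_of_eventually_within
    · have : Tendsto (fun t : ℝ => t / 2) (nhds 0) (nhds (0 / 2)) :=
        (tendsto_id (α := ℝ)).div_const 2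
      simpa using this.mono_left nhdsWithin_le_nhds
    · filter_upwards [self_mem_nhdsWithin] with t ht
      intro h
      exact ht (by simpa using (div_eq_zero_iff.mp h).resolve_right (by norm_num))
  have h1 : Tendsto (fun t : ℝ => (1 / 2) * (Real.sinh (t / 2) / (t / 2)) ^ 2)
      (nhdsWithin 0 {0}ᶜ) (nhds (1 / 2)) := by
    have := ((sinh_div_tendsto.comp hhalf).pow 2).const_mul (1 / 2 : ℝ)
    simpa using this
  refine h1.congr' ?_
  filter_upwards [self_mem_nhdsWithin] with t ht
  have ht0 : t ≠ 0 := ht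
  have hid : Real.cosh t - 1 = 2 * Real.sinh (t / 2) ^ 2 := by
    have : Real.cosh (2 * (t / 2)) = Real.cosh (t / 2) ^ 2 + Real.sinh (t / 2) ^ 2 :=
      Real.cosh_two_mul _
    rw [Real.cosh_sq] at this
    have h2 : (2 : ℝ) * (t / 2) = t := by ring
    rw [h2] at this
    linarith
  rw [hid]
  field_simp

lemma log_one_add_div : Tendsto (fun x : ℝ => Real.log (1 + x) / x)
    (nhdsWithin 0 {0}ᶜ) (nhds 1) := by
  have hd : HasDerivAt (fun x : ℝ => Real.log (1 + x)) 1 0 := by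
    have h1 : HasDerivAt (fun x : ℝ => 1 + x) 1 0 := by
      simpa using (hasDerivAt_id (0 : ℝ)).const_add (1 : ℝ)
    have := h1.log (by norm_num)
    simpa using this
  have h := hasDerivAt_iff_tendsto_slope.mp hd
  refine h.congr (fun t => ?_)
  simp [slope_def_field, div_eq_inv_mul]

lemma cosh_coord_tendsto (c : ℝ) : Tendsto (fun α : ℝ => (Real.cosh (α * c) - 1) / α ^ 2)
    (nhdsWithin 0 {0}ᶜ) (nhds (c ^ 2 / 2)) := by
  rcases eq_or_ne c 0 with hc | hc
  · simp [hc]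
  · have hmap : Tendsto (fun α : ℝ => α * c) (nhdsWithin 0 {0}ᶜ) (nhdsWithin 0 {0}ᶜ) := by
      apply tendsto_nhdsWithin_of_tendsto_nhds_of_eventually_within
      · have : Tendsto (fun α : ℝ => α * c) (nhds 0) (nhds (0 * c)) :=
          (tendsto_id (α := ℝ)).mul_const c
        simpa using this.mono_left nhdsWithin_le_nhds
      · filter_upwards [self_mem_nhdsWithin] with t ht
        exact mul_ne_zero ht hc
    have h1 := (cosh_sub_one_div_sq.comp hmap).const_mul (c ^ 2)
    have h2 : c ^ 2 * (1 / 2) = c ^ 2 / 2 := by ring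
    rw [h2] at h1
    refine h1.congr' ?_
    filter_upwards [self_mem_nhdsWithin] with t ht
    have ht0 : t ≠ 0 := ht
    simp only [Function.comp]
    rw [mul_pow]
    field_simp

/-- Normalization constant `η_lse(α) = 1 / log((1/2)(exp α + exp (−α)))`. -/
noncomputable def etaLse (α : ℝ) : ℝ :=
  1 / Real.log ((1 / 2) * (Real.exp α + Real.exp (-α)))

/-- The LogSumExp obstacle function
`o^lse(ξ; α) = η_lse(α) * log((1/(2n)) ∑ i, (exp (α ξ_i) + exp (−α ξ_i)))`. -/
noncomputable def oLse (n : ℕ) (α : ℝ) (ξ : Fin n → ℝ) : ℝ :=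
  etaLse α * Real.log ((1 / (2 * (n : ℝ))) * ∑ i, (Real.exp (α * ξ i) + Real.exp (-(α * ξ i))))

/-- For every `n ≥ 1` and `ξ ∈ ℝ^n`, the LogSumExp obstacle function converges as
the smoothing parameter tends to zero from above:
`lim_{α → 0⁺} o^lse(ξ; α) = ‖ξ‖₂² / n`. -/
theorem oLse_tendsto_zero (n : ℕ) (hn : 1 ≤ n) (ξ : Fin n → ℝ) :
    Filter.Tendsto (fun α : ℝ => oLse n α ξ) (nhdsWithin 0 (Set.Ioi 0))
      (nhds ((∑ i, (ξ i) ^ 2) / (n : ℝ))) := by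
  have hnR : (0 : ℝ) < (n : ℝ) := by exact_mod_cast hn
  have hne : (n : ℝ) ≠ 0 := hnR.ne'
  -- rewrite eta in terms of cosh
  have hcosh_eq : ∀ α : ℝ, (1 / 2 : ℝ) * (Real.exp α + Real.exp (-α)) = Real.cosh α := by
    intro α; rw [Real.cosh_eq]; ring
  -- rewrite the inner expression
  set h : ℝ → ℝ := fun α => (1 / (n : ℝ)) * ∑ i, Real.cosh (α * ξ i) - 1 with hh
  have hexpr : ∀ α : ℝ,
      (1 / (2 * (n : ℝ))) * ∑ i, (Real.exp (α * ξ i) + Real.exp (-(α * ξ i))) = 1 + h α := by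
    intro α
    have hs : ∑ i, (Real.exp (α * ξ i) + Real.exp (-(α * ξ i)))
        = 2 * ∑ i, Real.cosh (α * ξ i) := by
      rw [Finset.mul_sum]
      refine Finset.sum_congr rfl fun i _ => ?_
      rw [Real.cosh_eq]; ring
    rw [hs, hh]
    field_simp
    ring
  by_cases hξ : ξ = 0
  · subst hξ
    have hconst : ∀ α : ℝ, oLse n α 0 = 0 := by
      intro α
      have : (1 / (2 * (n : ℝ))) * ∑ i : Fin n, (Real.exp (α * 0) + Real.exp (-(α * 0))) = 1 := by
        simp [Finset.sum_const]
        field_simp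
        ring
      simp only [oLse, Pi.zero_apply]
      rw [this, Real.log_one, mul_zero]
    have : (∑ i : Fin n, ((0 : Fin n → ℝ) i) ^ 2) / (n : ℝ) = 0 := by simp
    rw [this]
    exact tendsto_const_nhds.congr fun α => (hconst α).symm
  · obtain ⟨j, hj⟩ : ∃ j, ξ j ≠ 0 := by
      by_contra hcon
      push_neg at hcon
      exact hξ (funext hcon)
    -- positivity of h on Ioi 0
    have hpos : ∀ α : ℝ, α ∈ Set.Ioi (0 : ℝ) → 0 < h α := by
      intro α hα
      have hα0 : α ≠ 0 := (ne_of_gt hα)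
      have hsum : (n : ℝ) < ∑ i, Real.cosh (α * ξ i) := by
        have h1 : ∑ _i : Fin n, (1 : ℝ) < ∑ i, Real.cosh (α * ξ i) := by
          refine Finset.sum_lt_sum (fun i _ => Real.one_le_cosh _) ⟨j, Finset.mem_univ j, ?_⟩
          exact (Real.one_lt_cosh).mpr (mul_ne_zero hα0 hj)
        simpa using h1
      have : 1 < (1 / (n : ℝ)) * ∑ i, Real.cosh (α * ξ i) := by
        rw [div_mul_eq_mul_div, one_mul, lt_div_iff₀ hnR, one_mul]
        exact hsum
      simp only [hh]; linarith
    -- h / α² tends to S/(2n)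
    have hHdiv : Tendsto (fun α : ℝ => h α / α ^ 2) (nhdsWithin 0 {0}ᶜ)
        (nhds ((∑ i, (ξ i) ^ 2) / (2 * (n : ℝ)))) := by
      have hsum : Tendsto (fun α : ℝ => ∑ i, (Real.cosh (α * ξ i) - 1) / α ^ 2)
          (nhdsWithin 0 {0}ᶜ) (nhds (∑ i, (ξ i) ^ 2 / 2)) :=
        tendsto_finset_sum _ fun i _ => cosh_coord_tendsto (ξ i)
      have h1 := hsum.const_mul (1 / (n : ℝ))
      have h2 : (1 / (n : ℝ)) * ∑ i, (ξ i) ^ 2 / 2 = (∑ i, (ξ i) ^ 2) / (2 * (n : ℝ)) := by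
        rw [← Finset.sum_div]
        ring
      rw [h2] at h1
      refine h1.congr' ?_
      filter_upwards [self_mem_nhdsWithin] with t ht
      have ht0 : t ≠ 0 := ht
      have hs2 : ∑ i, (Real.cosh (t * ξ i) - 1) / t ^ 2
          = (∑ i, Real.cosh (t * ξ i) - (n : ℝ)) / t ^ 2 := by
        rw [← Finset.sum_div, Finset.sum_sub_distrib]
        simp
      rw [hs2, hh]
      field_simp
    -- h tends to 0 within the punctured filter, targeted into {0}ᶜ
    have hcont : Continuous h := by
      apply Continuous.sub
      · exact continuous_const.mul (continuous_finset_sum _ fun i _ =>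
          Real.continuous_cosh.comp (continuous_id.mul continuous_const))
      · exact continuous_const
    have hzero : h 0 = 0 := by
      simp [hh, Real.cosh_zero, Finset.sum_const]
      field_simp
      ring
    have hH0 : Tendsto h (nhdsWithin 0 (Set.Ioi 0)) (nhdsWithin 0 {0}ᶜ) := by
      apply tendsto_nhdsWithin_of_tendsto_nhds_of_eventually_within
      · have := hcont.tendsto 0
        rw [hzero] at this
        exact this.mono_left nhdsWithin_le_nhds
      · filter_upwards [self_mem_nhdsWithin] with α hα
        exact (hpos α hα).ne'
    have hIoi : nhdsWithin (0 : ℝ) (Set.Ioi 0) ≤ nhdsWithin 0 {0}ᶜ :=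
      nhdsWithin_mono 0 fun x hx => (ne_of_gt hx)
    -- numerator divided by α²
    have hN : Tendsto (fun α : ℝ => Real.log (1 + h α) / α ^ 2)
        (nhdsWithin 0 (Set.Ioi 0)) (nhds ((∑ i, (ξ i) ^ 2) / (2 * (n : ℝ)))) := by
      have h1 : Tendsto (fun α : ℝ => (Real.log (1 + h α) / h α) * (h α / α ^ 2))
          (nhdsWithin 0 (Set.Ioi 0)) (nhds (1 * ((∑ i, (ξ i) ^ 2) / (2 * (n : ℝ))))) :=
        (log_one_add_div.comp hH0).mul (hHdiv.mono_left hIoi)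
      rw [one_mul] at h1
      refine h1.congr' ?_
      filter_upwards [self_mem_nhdsWithin] with α hα
      have hne' : h α ≠ 0 := (hpos α hα).ne'
      field_simp
    -- denominator divided by α²
    have hG0 : Tendsto (fun α : ℝ => Real.cosh α - 1) (nhdsWithin 0 (Set.Ioi 0))
        (nhdsWithin 0 {0}ᶜ) := by
      apply tendsto_nhdsWithin_of_tendsto_nhds_of_eventually_within
      · have : Tendsto (fun α : ℝ => Real.cosh α - 1) (nhds 0) (nhds (Real.cosh 0 - 1)) :=
          (Real.continuous_cosh.sub continuous_const).tendsto 0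
        simpa using this.mono_left nhdsWithin_le_nhds
      · filter_upwards [self_mem_nhdsWithin] with α hα
        have : 1 < Real.cosh α := Real.one_lt_cosh.mpr (ne_of_gt hα)
        exact (by linarith : Real.cosh α - 1 ≠ 0)
    have hD : Tendsto (fun α : ℝ => Real.log (Real.cosh α) / α ^ 2)
        (nhdsWithin 0 (Set.Ioi 0)) (nhds (1 / 2)) := by
      have h1 : Tendsto (fun α : ℝ =>
          (Real.log (1 + (Real.cosh α - 1)) / (Real.cosh α - 1)) * ((Real.cosh α - 1) / α ^ 2))
          (nhdsWithin 0 (Set.Ioi 0)) (nhds (1 * (1 / 2))) :=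
        (log_one_add_div.comp hG0).mul (cosh_sub_one_div_sq.mono_left hIoi)
      rw [one_mul] at h1
      refine h1.congr' ?_
      filter_upwards [self_mem_nhdsWithin] with α hα
      have h2 : 1 < Real.cosh α := Real.one_lt_cosh.mpr (ne_of_gt hα)
      have hne' : Real.cosh α - 1 ≠ 0 := by linarith
      rw [add_sub_cancel]
      field_simp
    -- combine
    have hdiv : Tendsto (fun α : ℝ =>
        (Real.log (1 + h α) / α ^ 2) / (Real.log (Real.cosh α) / α ^ 2))
        (nhdsWithin 0 (Set.Ioi 0)) (nhds (((∑ i, (ξ i) ^ 2) / (2 * (n : ℝ))) / (1 / 2))) :=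
      hN.div hD (by norm_num)
    have hval : ((∑ i, (ξ i) ^ 2) / (2 * (n : ℝ))) / (1 / 2 : ℝ) = (∑ i, (ξ i) ^ 2) / (n : ℝ) := by
      field_simp
    rw [hval] at hdiv
    refine hdiv.congr' ?_
    filter_upwards [self_mem_nhdsWithin] with α hα
    have hα0 : α ≠ 0 := (ne_of_gt hα)
    have h2 : 1 < Real.cosh α := Real.one_lt_cosh.mpr hα0
    have hlogpos : 0 < Real.log (Real.cosh α) := Real.log_pos h2
    rw [oLse, etaLse, hcosh_eq α, hexpr α]
    have hα2 : α ^ 2 ≠ 0 := pow_ne_zero 2 hα0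
    field_simp
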